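/- Let θ be a smooth 1-form and K a smooth function on a 2-dimensional manifold M, and let ω₁, ω₂ be smooth 1-forms with ω₁ ∧ ω₂ nowhere zero, such that dθ = K ω₁ ∧ ω₂. If dK = 3K θ on M, then K = 0 identically on M. -/

import Mathlib

/-!
Chart-level formalization of planar web geometry: the 2-manifold is (an open
subset `U` of) `V = ℝ × ℝ`; 1-forms are smooth maps `V → (V →L[ℝ] ℝ)`;
`dOne` is the exterior derivative of a 1-form and `wedge` the wedge product
of two 1-forms, both evaluated at a point on a pair of tangent vectors.
-/

noncomputable section

abbrev V : Type := ℝ × ℝ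

abbrev OneForm : Type := V → (V →L[ℝ] ℝ)

/-- Exterior derivative of a 1-form, evaluated at `x` on vectors `u, v`. -/
def dOne (ω : OneForm) : V → V → V → ℝ :=
  fun x u v => (fderiv ℝ ω x u) v - (fderiv ℝ ω x v) u

/-- Wedge product of two 1-forms, evaluated at `x` on vectors `u, v`. -/
def wedge (ω η : OneForm) : V → V → V → ℝ :=
  fun x u v => ω x u * η x v - ω x v * η x u

/-- if `dθ = K ω₁∧ω₂` with `ω₁∧ω₂` nowhere zero and
`dK = 3Kθ` (vanishing covariant derivatives of the weight-3 relative
invariant `K`), then `K = 0` identically. -/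
theorem curvature_vanishes_of_dK_eq_three_K_theta
    (U : Set V) (hU : IsOpen U)
    (θ ω₁ ω₂ : OneForm) (K : V → ℝ)
    (hθ : ContDiffOn ℝ (⊤ : ℕ∞) θ U) (hω₁ : ContDiffOn ℝ (⊤ : ℕ∞) ω₁ U)
    (hω₂ : ContDiffOn ℝ (⊤ : ℕ∞) ω₂ U) (hK : ContDiffOn ℝ (⊤ : ℕ∞) K U)
    (hnz : ∀ x ∈ U, ∃ u v : V, wedge ω₁ ω₂ x u v ≠ 0)
    (hdθ : ∀ x ∈ U, ∀ u v : V, dOne θ x u v = K x * wedge ω₁ ω₂ x u v)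
    (hdK : ∀ x ∈ U, ∀ u : V, fderiv ℝ K x u = 3 * K x * θ x u) :
    ∀ x ∈ U, K x = 0 := by
  intro x hx
  obtain ⟨u, v, huv⟩ := hnz x hx
  -- the function 3K • θ, which equals fderiv K on U
  set f : OneForm := fun y => (3 * K y) • θ y with hf
  have hmem : U ∈ nhds x := hU.mem_nhds hx
  have hKx : ContDiffAt ℝ (⊤ : ℕ∞) K x := hK.contDiffAt hmem
  have hθx : ContDiffAt ℝ (⊤ : ℕ∞) θ x := hθ.contDiffAt hmem
  have hKd : DifferentiableAt ℝ K x := hKx.differentiableAt (by simp)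
  have hθd : DifferentiableAt ℝ θ x := hθx.differentiableAt (by simp)
  have hcd : DifferentiableAt ℝ (fun y => 3 * K y) x := hKd.const_mul 3
  -- fderiv K = f on U
  have heq : ∀ y ∈ U, fderiv ℝ K y = f y := by
    intro y hy
    refine ContinuousLinearMap.ext fun w => ?_
    simp only [hf, ContinuousLinearMap.smul_apply, smul_eq_mul]
    rw [hdK y hy w]
  have hEv : (fderiv ℝ K) =ᶠ[nhds x] f :=
    Filter.eventuallyEq_of_mem hmem heq
  have hfd : fderiv ℝ (fderiv ℝ K) x = fderiv ℝ f x := hEv.fderiv_eq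
  -- symmetry of second derivative
  have hsymm : IsSymmSndFDerivAt ℝ K x :=
    (hKx.of_le (m := 2) (WithTop.coe_le_coe.mpr le_top)).isSymmSndFDerivAt (by simp [minSmoothness_of_isRCLikeNormedField])
  -- compute fderiv f
  have hfderiv : fderiv ℝ f x =
      (3 * K x) • fderiv ℝ θ x + (fderiv ℝ (fun y => 3 * K y) x).smulRight (θ x) :=
    fderiv_smul hcd hθd
  have happ : ∀ a b : V, fderiv ℝ f x a b =
      (3 * K x) * fderiv ℝ θ x a b + (3 * fderiv ℝ K x a) * θ x b := by
    intro a b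
    rw [hfderiv]
    have h3 : fderiv ℝ (fun y => 3 * K y) x a = 3 * fderiv ℝ K x a := by
      rw [fderiv_const_mul hKd]; simp
    simp only [ContinuousLinearMap.add_apply, ContinuousLinearMap.smul_apply,
      ContinuousLinearMap.smulRight_apply, h3, smul_eq_mul]
  have key : fderiv ℝ f x u v = fderiv ℝ f x v u := by
    rw [← hfd]; exact hsymm u v
  rw [happ u v, happ v u, hdK x hx u, hdK x hx v] at key
  have hdθuv := hdθ x hx u v
  simp only [dOne] at hdθuv
  -- derive 3 K² wedge = 0
  have h1 : 3 * K x * (((fderiv ℝ θ x) u) v - ((fderiv ℝ θ x) v) u) = 0 := by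
    linear_combination key
  rw [hdθuv] at h1
  have : 3 * K x ^ 2 * wedge ω₁ ω₂ x u v = 0 := by linear_combination h1
  have hK2 : K x ^ 2 = 0 := by
    rcases mul_eq_zero.mp this with h | h
    · rcases mul_eq_zero.mp h with h | h
      · norm_num at h
      · exact h
    · exact absurd h huv
  exact pow_eq_zero_iff (n := 2) (by norm_num) |>.mp hK2
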